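/- There exists a formal power series f in 2 variables over ℝ with ord f = 4 whose initial block possesses a square root in MvPowerSeries (Fin 2) ℝ, but such that f itself possesses no square root in MvPowerSeries (Fin 2) ℝ. (Hence the converse of the statement 'if f has an n-th root then its initial block has an n-th root' fails for multivariable formal power series, in contrast to the one-variable case.) -/

import Mathlib

/-- The initial block (homogeneous part of degree `s`) of a two-variable series. -/
noncomputable def initialBlock (f : MvPowerSeries (Fin 2) ℝ) (s : ℕ) :
    MvPowerSeries (Fin 2) ℝ :=
  fun c => if Finsupp.degree c = s then MvPowerSeries.coeff c f else 0

private noncomputable def Fex : MvPowerSeries (Fin 2) ℝ :=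
  MvPowerSeries.monomial (Finsupp.single 0 4) 1 + MvPowerSeries.monomial (Finsupp.single 1 5) 1

private lemma coeff_Fex (c : Fin 2 →₀ ℕ) :
    MvPowerSeries.coeff c Fex =
      (if c = Finsupp.single 0 4 then (1:ℝ) else 0) +
      (if c = Finsupp.single 1 5 then (1:ℝ) else 0) := by
  simp [Fex, MvPowerSeries.coeff_monomial]

private lemma degree_single (a : Fin 2) (n : ℕ) :
    Finsupp.degree (Finsupp.single a n) = n := by
  rcases eq_or_ne n 0 with h | h
  · simp [h, Finsupp.degree]
  · exact Finsupp.degree_single a n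

private lemma coeff_sq (g : MvPowerSeries (Fin 2) ℝ) (n : ℕ) :
    MvPowerSeries.coeff (Finsupp.single 1 n) (g ^ 2) =
      ∑ p ∈ Finset.HasAntidiagonal.antidiagonal n,
        MvPowerSeries.coeff (Finsupp.single 1 p.1) g *
          MvPowerSeries.coeff (Finsupp.single 1 p.2) g := by
  rw [pow_two, MvPowerSeries.coeff_mul, Finsupp.antidiagonal_single, Finset.sum_map]
  rfl

private lemma single_ne (n : ℕ) : Finsupp.single (1 : Fin 2) n ≠ Finsupp.single 0 4 := by
  intro h
  rcases (Finsupp.single_eq_single_iff _ _ _ _).1 h with ⟨h1, _⟩ | ⟨_, h2⟩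
  · exact absurd h1 (by decide)
  · exact absurd h2 (by norm_num)

private lemma single_eq_iff (n : ℕ) :
    Finsupp.single (1 : Fin 2) n = Finsupp.single 1 5 ↔ n = 5 := by
  constructor
  · intro h
    rcases (Finsupp.single_eq_single_iff _ _ _ _).1 h with ⟨_, h2⟩ | ⟨h1, h2⟩
    · exact h2
    · omega
  · rintro rfl; rfl

/-- There exists a two-variable formal power series over `ℝ` of order `4` whose
initial block possesses a square root, but which itself has no square root.
Hence the converse of "if `f` has an `n`-th root then its initial block has an
`n`-th root" fails for multivariable formal power series. -/
theorem exists_no_sqrt_with_initialBlock_sqrt :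
    ∃ f : MvPowerSeries (Fin 2) ℝ,
      f.order = (4 : ℕ∞) ∧
      (∃ r : MvPowerSeries (Fin 2) ℝ, r ^ 2 = initialBlock f 4) ∧
      ¬ ∃ g : MvPowerSeries (Fin 2) ℝ, g ^ 2 = f := by
  refine ⟨Fex, ?_, ?_, ?_⟩
  · -- order = 4
    rw [show ((4 : ℕ∞)) = ((4 : ℕ) : ℕ∞) from rfl, MvPowerSeries.order_eq_nat]
    constructor
    · refine ⟨Finsupp.single 0 4, ?_, degree_single 0 4⟩
      rw [coeff_Fex]
      have h : Finsupp.single (0 : Fin 2) 4 ≠ Finsupp.single 1 5 := by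
        intro h
        rcases (Finsupp.single_eq_single_iff _ _ _ _).1 h with ⟨h1, _⟩ | ⟨h1, _⟩
        · exact absurd h1 (by decide)
        · omega
      simp [h]
    · intro d hd
      rw [coeff_Fex]
      have h1 : d ≠ Finsupp.single 0 4 := by
        rintro rfl; rw [degree_single] at hd; omega
      have h2 : d ≠ Finsupp.single 1 5 := by
        rintro rfl; rw [degree_single] at hd; omega
      simp [h1, h2]
  · -- initial block has a square root
    refine ⟨MvPowerSeries.monomial (Finsupp.single 0 2) 1, ?_⟩
    rw [pow_two, MvPowerSeries.monomial_mul_monomial]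
    have hs : Finsupp.single (0 : Fin 2) 2 + Finsupp.single 0 2 = Finsupp.single 0 4 := by
      rw [← Finsupp.single_add]
    ext c
    rw [hs, one_mul, MvPowerSeries.coeff_monomial]
    show _ = (if Finsupp.degree c = 4 then MvPowerSeries.coeff c Fex else 0)
    rw [coeff_Fex]
    by_cases h : c = Finsupp.single 0 4
    · subst h
      rw [if_pos rfl, if_pos (degree_single 0 4),
        if_neg (fun h => single_ne 5 h.symm), add_zero]
    · rw [if_neg h]
      by_cases hd : Finsupp.degree c = 4
      · rw [if_pos hd, if_neg, add_zero]
        rintro rfl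
        rw [degree_single] at hd; omega
      · rw [if_neg hd]
  · -- no square root
    rintro ⟨g, hg⟩
    set a : ℕ → ℝ := fun n => MvPowerSeries.coeff (Finsupp.single 1 n) g with ha
    have key : ∀ n : ℕ, ∑ i ∈ Finset.range (n + 1), a i * a (n - i) =
        (if n = 5 then (1:ℝ) else 0) := by
      intro n
      rw [← Finset.Nat.sum_antidiagonal_eq_sum_range_succ_mk (fun p => a p.1 * a p.2)]
      rw [← coeff_sq, hg, coeff_Fex, if_neg (single_ne n)]
      rw [zero_add]
      simp only [single_eq_iff]
    have h0 := key 0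
    have h2 := key 2
    have h4 := key 4
    have h5 := key 5
    simp only [Finset.sum_range_succ, Finset.sum_range_zero] at h0 h2 h4 h5
    norm_num at h0 h2 h4 h5
    have ha0 : a 0 = 0 := by nlinarith [sq_nonneg (a 0)]
    rw [ha0] at h2
    have ha1 : a 1 = 0 := by nlinarith [sq_nonneg (a 1)]
    rw [ha0, ha1] at h4
    have ha2 : a 2 = 0 := by nlinarith [sq_nonneg (a 2)]
    rw [ha0, ha1, ha2] at h5
    norm_num at h5
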